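/- A finitely generated commutative ℂ-algebra R is reduced if and only if the family of all ℂ-algebra homomorphisms R → ℂ is jointly injective (i.e., for x ≠ y in R there is a ℂ-algebra map φ : R → ℂ with φ(x) ≠ φ(y)). -/

import Mathlib

theorem stmt11 (R : Type*) [CommRing R] [Algebra ℂ R] [Algebra.FiniteType ℂ R] :
    IsReduced R ↔ ∀ x y : R, x ≠ y → ∃ φ : R →ₐ[ℂ] ℂ, φ x ≠ φ y := by
  constructor
  · intro hred x y hxy
    haveI : IsJacobsonRing R := isJacobsonRing_of_finiteType (A := ℂ)
    have hz : x - y ≠ 0 := sub_ne_zero.mpr hxy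
    have hnil : nilradical R = ⊥ := nilradical_eq_zero R
    -- ⊥ is radical, so its jacobson is ⊥
    have hjac : (⊥ : Ideal R).jacobson = ⊥ := by
      have : (⊥ : Ideal R).IsRadical := by
        rw [← hnil]; exact Ideal.radical_isRadical ⊥
      exact ‹IsJacobsonRing R›.out this
    -- find maximal ideal not containing x - y
    have hmem : x - y ∉ (⊥ : Ideal R).jacobson := by
      rw [hjac]; simpa using hz
    rw [Ideal.jacobson, Ideal.mem_sInf] at hmem
    push_neg at hmem
    obtain ⟨m, ⟨-, hm⟩, hxm⟩ := hmem
    haveI : m.IsMaximal := hm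
    -- residue field is ℂ
    haveI : Algebra.FiniteType ℂ (R ⧸ m) :=
      Algebra.FiniteType.of_surjective (Ideal.Quotient.mkₐ ℂ m)
        Ideal.Quotient.mk_surjective
    letI : Field (R ⧸ m) := Ideal.Quotient.field m
    have hfin : Module.Finite ℂ (R ⧸ m) := finite_of_finite_type_of_isJacobsonRing ℂ (R ⧸ m)
    haveI : Algebra.IsIntegral ℂ (R ⧸ m) := Algebra.IsIntegral.of_finite ℂ _
    have hsurj : Function.Surjective (algebraMap ℂ (R ⧸ m)) :=
      IsAlgClosed.algebraMap_bijective_of_isIntegral.2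
    have hinj : Function.Injective (algebraMap ℂ (R ⧸ m)) :=
      (algebraMap ℂ (R ⧸ m)).injective
    let e : ℂ ≃ₐ[ℂ] (R ⧸ m) := AlgEquiv.ofBijective (Algebra.ofId ℂ _) ⟨hinj, hsurj⟩
    refine ⟨(e.symm.toAlgHom).comp (Ideal.Quotient.mkₐ ℂ m), ?_⟩
    intro h
    apply hxm
    have : Ideal.Quotient.mk m x = Ideal.Quotient.mk m y := by
      apply e.symm.injective
      exact h
    rwa [← Ideal.Quotient.mk_eq_mk_iff_sub_mem]
  · intro h
    rw [isReduced_iff]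
    intro a ha
    by_contra h0
    obtain ⟨φ, hφ⟩ := h a 0 h0
    apply hφ
    obtain ⟨n, hn⟩ := ha
    have : (φ a) ^ n = 0 := by rw [← map_pow, hn, map_zero]
    rw [map_zero]
    exact IsNilpotent.eq_zero ⟨n, this⟩
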